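/- The relation ⊑ on P(Flat_e(I)) (defined via inversion indices) is a preorder: it is reflexive and transitive. -/

import Mathlib

open scoped ENNReal

noncomputable section

def dot {I : Type*} (u v : I → ℝ≥0∞) : ℝ≥0∞ := ∑' i, u i * v i

def orth {I : Type*} (P : Set (I → ℝ≥0∞)) : Set (I → ℝ≥0∞) :=
  {v | ∀ u ∈ P, dot u v ≤ 1}

/-- The Dirac mass at the error element `⊤` (encoded as `none`). -/
def eTop {I : Type*} : Option I → ℝ≥0∞ := fun x => x.elim 1 fun _ => 0

/-- Sub-probability distributions on `I` with an extra error point `⊤ = none`. -/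
def Pflat (I : Type*) : Set (Option I → ℝ≥0∞) := {u | ∑' x, u x ≤ 1}

/-- The extensional preorder on `Pflat I`, defined via inversion indices:
`u ⊑ v` iff `u ⊤ + ∑_{i : u i > v i} u i ≤ v ⊤ + ∑_{i : u i > v i} v i`. -/
def extLE {I : Type*} (u v : Option I → ℝ≥0∞) : Prop :=
  u none + ∑' i : {i : I // v (some i) < u (some i)}, u (some i.1)
    ≤ v none + ∑' i : {i : I // v (some i) < u (some i)}, v (some i.1)

lemma sum_some_le {I : Type*} (v : Option I → ℝ≥0∞) (s : Set I) :
    ∑' i : s, v (some i) ≤ ∑' x, v x :=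
  le_trans (ENNReal.tsum_comp_le_tsum_of_injective Subtype.coe_injective
      (fun i : I => v (some i)))
    (ENNReal.tsum_comp_le_tsum_of_injective (Option.some_injective I) v)

lemma tsum_sub_gen {α : Type*} {f g : α → ℝ≥0∞} (h₁ : ∑' i, g i ≠ ∞) (h₂ : ∀ i, g i ≤ f i) :
    ∑' i, (f i - g i) = ∑' i, f i - ∑' i, g i := by
  refine ENNReal.eq_sub_of_add_eq h₁ ?_
  rw [← ENNReal.tsum_add]
  exact tsum_congr fun i => tsub_add_cancel_of_le (h₂ i)

lemma key {I : Type*} (u v : Option I → ℝ≥0∞) (hv : v ∈ Pflat I) :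
    extLE u v ↔ u none + ∑' i : I, (u (some i) - v (some i)) ≤ v none := by
  set s : Set I := {i : I | v (some i) < u (some i)} with hs
  have hsupp : Function.support (fun i : I => u (some i) - v (some i)) ⊆ s := by
    intro i hi
    simp only [Function.mem_support] at hi
    by_contra h
    exact hi (tsub_eq_zero_of_le (le_of_not_gt h))
  have hD : ∑' i : I, (u (some i) - v (some i))
      = ∑' i : s, (u (some i.1) - v (some i.1)) :=
    (tsum_subtype_eq_of_support_subset hsupp).symm
  have hle : ∀ i : s, v (some i.1) ≤ u (some i.1) := fun i => le_of_lt i.2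
  have hSv_fin : ∑' i : s, v (some i.1) ≠ ∞ :=
    ne_top_of_le_ne_top ENNReal.one_ne_top (le_trans (sum_some_le v s) hv)
  have hSvSu : ∑' i : s, v (some i.1) ≤ ∑' i : s, u (some i.1) :=
    ENNReal.tsum_le_tsum hle
  have hsub : ∑' i : s, (u (some i.1) - v (some i.1))
      = ∑' i : s, u (some i.1) - ∑' i : s, v (some i.1) :=
    tsum_sub_gen hSv_fin hle
  have hE : extLE u v ↔
      u none + ∑' i : s, u (some i.1) ≤ v none + ∑' i : s, v (some i.1) := Iff.rfl
  rw [hE, hD, hsub]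
  have e : u none + (∑' i : s, u (some i.1) - ∑' i : s, v (some i.1)) + ∑' i : s, v (some i.1)
      = u none + ∑' i : s, u (some i.1) := by
    rw [add_assoc, tsub_add_cancel_of_le hSvSu]
  constructor
  · intro h
    rw [← ENNReal.add_le_add_iff_right hSv_fin, e]
    exact h
  · intro h
    calc u none + ∑' i : s, u (some i.1)
        = u none + (∑' i : s, u (some i.1) - ∑' i : s, v (some i.1))
            + ∑' i : s, v (some i.1) := e.symm
      _ ≤ v none + ∑' i : s, v (some i.1) := add_le_add_left h _

theorem stmt14 {I : Type*} [Countable I] :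
    (∀ u ∈ Pflat I, extLE u u) ∧
    (∀ u ∈ Pflat I, ∀ v ∈ Pflat I, ∀ w ∈ Pflat I,
      extLE u v → extLE v w → extLE u w) := by
  constructor
  · intro u _
    exact le_refl _
  · intro u _ v hv w hw huv hvw
    rw [key u v hv] at huv
    rw [key v w hw] at hvw
    rw [key u w hw]
    have htri : ∑' i : I, (u (some i) - w (some i))
        ≤ (∑' i : I, (u (some i) - v (some i))) + ∑' i : I, (v (some i) - w (some i)) := by
      rw [← ENNReal.tsum_add]
      exact ENNReal.tsum_le_tsum fun i => tsub_le_tsub_add_tsub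
    calc u none + ∑' i : I, (u (some i) - w (some i))
        ≤ (u none + ∑' i : I, (u (some i) - v (some i)))
            + ∑' i : I, (v (some i) - w (some i)) := by
          rw [add_assoc]; exact add_le_add_right htri _
      _ ≤ v none + ∑' i : I, (v (some i) - w (some i)) := add_le_add_left huv _
      _ ≤ w none := hvw
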